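/- Let k ≥ 2 and let −π/2 ≤ θ_1 < θ_2 < ⋯ < θ_k ≤ π/2 with θ_min = min_{p≠j} |θ_p − θ_j|. Then for every j = 1, …, k, Π_{1 ≤ p ≤ k, p ≠ j} |e^{i θ_j} − e^{i θ_p}| ≥ ζ(k) · (2 θ_min / π)^{k−1}. -/

import Mathlib

/-- `ζ(k) = (((k−1)/2)!)²` for odd `k`, and `ζ(k) = (k/2)!((k−2)/2)!` for even `k`. -/
noncomputable def zeta (k : ℕ) : ℝ :=
  if k % 2 = 1 then ((((k - 1) / 2).factorial : ℝ)) ^ 2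
  else ((k / 2).factorial : ℝ) * (((k - 2) / 2).factorial : ℝ)

lemma aux_abs_exp_sub (a b : ℝ) :
    ‖Complex.exp (Complex.I * a) - Complex.exp (Complex.I * b)‖
      = 2 * |Real.sin ((a - b) / 2)| := by
  rw [mul_comm Complex.I (a : ℂ), mul_comm Complex.I (b : ℂ)]
  rw [Complex.norm_def, Complex.normSq_apply]
  simp only [Complex.sub_re, Complex.sub_im, Complex.exp_ofReal_mul_I_re,
    Complex.exp_ofReal_mul_I_im]
  have hs : Real.sin ((a - b) / 2) ^ 2 = 1 / 2 - Real.cos (a - b) / 2 := by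
    have := Real.sin_sq_eq_half_sub ((a - b) / 2)
    rwa [show 2 * ((a - b) / 2) = a - b by ring] at this
  have hc : Real.cos (a - b) = Real.cos a * Real.cos b + Real.sin a * Real.sin b :=
    Real.cos_sub a b
  have hpa := Real.sin_sq_add_cos_sq a
  have hpb := Real.sin_sq_add_cos_sq b
  have key : (Real.cos a - Real.cos b) * (Real.cos a - Real.cos b) +
      (Real.sin a - Real.sin b) * (Real.sin a - Real.sin b)
      = (2 * |Real.sin ((a - b) / 2)|) ^ 2 := by
    have : (2 * |Real.sin ((a - b) / 2)|) ^ 2 = 4 * Real.sin ((a - b) / 2) ^ 2 := by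
      rw [mul_pow, sq_abs]; ring
    rw [this, hs]
    nlinarith [hc, hpa, hpb]
  rw [key, Real.sqrt_sq (by positivity)]

lemma aux_two_abs_sin_ge (x : ℝ) (hx : |x| ≤ Real.pi) :
    2 / Real.pi * |x| ≤ 2 * |Real.sin (x / 2)| := by
  have hπ := Real.pi_pos
  have hx2 : |x| / 2 ≤ Real.pi / 2 := by linarith
  have h0 : 0 ≤ |x| / 2 := by positivity
  have hs := Real.mul_le_sin h0 hx2
  have habs : Real.sin (|x| / 2) ≤ |Real.sin (x / 2)| := by
    rcases abs_cases x with ⟨h, _⟩ | ⟨h, _⟩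
    · rw [h]; exact le_abs_self _
    · rw [h, show -x / 2 = -(x / 2) by ring, Real.sin_neg]; exact neg_le_abs _
  calc 2 / Real.pi * |x| = 2 * (2 / Real.pi * (|x| / 2)) := by ring
    _ ≤ 2 * Real.sin (|x| / 2) := by linarith
    _ ≤ 2 * |Real.sin (x / 2)| := by linarith

lemma aux_prod_range_sub (m : ℕ) : ∏ i ∈ Finset.range m, (m - i) = m.factorial := by
  rw [← Finset.prod_range_add_one_eq_factorial]
  rw [← Finset.prod_range_reflect (fun i => i + 1) m]
  refine Finset.prod_congr rfl fun i hi => ?_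
  rw [Finset.mem_range] at hi
  omega

lemma aux_fact_fact_le {n a : ℕ} (h : a ≤ n) :
    (n / 2).factorial * (n - n / 2).factorial ≤ a.factorial * (n - a).factorial := by
  have h1 := Nat.choose_mul_factorial_mul_factorial h
  have h2 := Nat.choose_mul_factorial_mul_factorial (Nat.div_le_self n 2)
  have h3 := Nat.choose_le_middle a n
  have hpos : 0 < n.choose (n / 2) := Nat.choose_pos (Nat.div_le_self n 2)
  refine Nat.le_of_mul_le_mul_left ?_ hpos
  calc n.choose (n / 2) * ((n / 2).factorial * (n - n / 2).factorial)
      = n.choose (n / 2) * (n / 2).factorial * (n - n / 2).factorial := by ring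
    _ = n.factorial := h2
    _ = n.choose a * a.factorial * (n - a).factorial := h1.symm
    _ = n.choose a * (a.factorial * (n - a).factorial) := by ring
    _ ≤ n.choose (n / 2) * (a.factorial * (n - a).factorial) :=
        Nat.mul_le_mul_right _ h3

lemma aux_zeta_eq (k : ℕ) (hk : 2 ≤ k) :
    zeta k = ((((k - 1) / 2).factorial * ((k - 1) - (k - 1) / 2).factorial : ℕ) : ℝ) := by
  unfold zeta
  by_cases h : k % 2 = 1
  · rw [if_pos h]
    have : (k - 1) - (k - 1) / 2 = (k - 1) / 2 := by omega
    rw [this]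
    push_cast
    ring
  · rw [if_neg h]
    have h1 : (k - 1) / 2 = (k - 2) / 2 := by omega
    have h2 : (k - 1) - (k - 2) / 2 = k / 2 := by omega
    rw [h1, h2]
    push_cast
    ring

/-- **Lemma 3.1.**  Let `k ≥ 2` and `−π/2 ≤ θ₁ < ⋯ < θ_k ≤ π/2` with minimum
separation `θ_min = min_{p≠j} |θ_p − θ_j|`.  Then for every `j`,
`Π_{p ≠ j} |e^{i θ_j} − e^{i θ_p}| ≥ ζ(k) (2 θ_min / π)^{k−1}`. -/
theorem prod_exp_diff_lower_bound
    (k : ℕ) (hk : 2 ≤ k) (θ : Fin k → ℝ) (hmono : StrictMono θ)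
    (hrange : ∀ i, θ i ∈ Set.Icc (-(Real.pi / 2)) (Real.pi / 2))
    (θmin : ℝ)
    (hθmin : IsLeast {d : ℝ | ∃ p j : Fin k, p ≠ j ∧ d = |θ p - θ j|} θmin) :
    ∀ j : Fin k,
      zeta k * (2 * θmin / Real.pi) ^ (k - 1) ≤
        ∏ p ∈ Finset.univ.erase j,
          ‖(Complex.exp (Complex.I * (θ j : ℂ))
            - Complex.exp (Complex.I * (θ p : ℂ)))‖ := by
  intro j
  have hπ := Real.pi_pos
  obtain ⟨⟨p0, j0, hne0, heq0⟩, hlb⟩ := hθmin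
  have hθmin_nonneg : 0 ≤ θmin := heq0 ▸ abs_nonneg _
  -- gap lemma
  have gap : ∀ d : ℕ, ∀ a b : Fin k, (b : ℕ) = (a : ℕ) + d →
      (d : ℝ) * θmin ≤ θ b - θ a := by
    intro d
    induction d with
    | zero =>
      intro a b hab
      have : a = b := Fin.ext (by omega)
      subst this
      simp
    | succ d ih =>
      intro a b hab
      have hc : (a : ℕ) + d < k := by omega
      set c : Fin k := ⟨(a : ℕ) + d, hc⟩ with hcdef
      have h1 : (d : ℝ) * θmin ≤ θ c - θ a := ih a c rfl
      have hcb : c < b := by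
        rw [Fin.lt_def]; simp [hcdef]; omega
      have hne : b ≠ c := by
        intro h; rw [h] at hcb; exact lt_irrefl _ hcb
      have h2 : θmin ≤ |θ b - θ c| := hlb ⟨b, c, hne, rfl⟩
      have h3 : θ c < θ b := hmono hcb
      rw [abs_of_pos (by linarith)] at h2
      push_cast
      linarith
  -- pairwise separation
  have sep : ∀ p : Fin k, p ≠ j →
      (Nat.dist (p : ℕ) (j : ℕ) : ℝ) * θmin ≤ |θ j - θ p| := by
    intro p hp
    rcases lt_trichotomy (p : ℕ) (j : ℕ) with h | h | h
    · have := gap ((j : ℕ) - (p : ℕ)) p j (by omega)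
      have hd : Nat.dist (p : ℕ) (j : ℕ) = (j : ℕ) - (p : ℕ) := by
        unfold Nat.dist; omega
      rw [hd]
      have : θ p < θ j := hmono (by rwa [Fin.lt_def])
      rw [abs_of_pos (by linarith)]
      linarith [this]
    · exact absurd (Fin.ext h) hp
    · have := gap ((p : ℕ) - (j : ℕ)) j p (by omega)
      have hd : Nat.dist (p : ℕ) (j : ℕ) = (p : ℕ) - (j : ℕ) := by
        unfold Nat.dist; omega
      rw [hd]
      have : θ j < θ p := hmono (by rwa [Fin.lt_def])
      rw [abs_of_neg (by linarith), neg_sub]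
      linarith [this]
  -- pointwise lower bound
  have pointwise : ∀ p ∈ Finset.univ.erase j,
      2 * θmin / Real.pi * (Nat.dist (p : ℕ) (j : ℕ) : ℝ) ≤
        ‖(Complex.exp (Complex.I * (θ j : ℂ))
          - Complex.exp (Complex.I * (θ p : ℂ)))‖ := by
    intro p hp
    have hpj : p ≠ j := (Finset.mem_erase.mp hp).1
    rw [aux_abs_exp_sub]
    have hxle : |θ j - θ p| ≤ Real.pi := by
      have h1 := (hrange j).1; have h2 := (hrange j).2
      have h3 := (hrange p).1; have h4 := (hrange p).2
      rw [abs_le]; constructor <;> linarith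
    have h5 := aux_two_abs_sin_ge (θ j - θ p) hxle
    have h6 := sep p hpj
    have h7 : 2 * θmin / Real.pi * (Nat.dist (p : ℕ) (j : ℕ) : ℝ)
        = 2 / Real.pi * ((Nat.dist (p : ℕ) (j : ℕ) : ℝ) * θmin) := by ring
    rw [h7]
    calc 2 / Real.pi * ((Nat.dist (p : ℕ) (j : ℕ) : ℝ) * θmin)
        ≤ 2 / Real.pi * |θ j - θ p| := by
          apply mul_le_mul_of_nonneg_left h6 (by positivity)
      _ ≤ 2 * |Real.sin ((θ j - θ p) / 2)| := h5
  -- nonnegativity of lower factors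
  have lower_nonneg : ∀ p ∈ Finset.univ.erase j,
      (0 : ℝ) ≤ 2 * θmin / Real.pi * (Nat.dist (p : ℕ) (j : ℕ) : ℝ) := by
    intro p _; positivity
  have main := Finset.prod_le_prod lower_nonneg pointwise
  -- compute the lower product
  have hcard : (Finset.univ.erase j).card = k - 1 := by
    rw [Finset.card_erase_of_mem (Finset.mem_univ j), Finset.card_univ, Fintype.card_fin]
  have hprod_split : ∏ p ∈ Finset.univ.erase j,
      (2 * θmin / Real.pi * (Nat.dist (p : ℕ) (j : ℕ) : ℝ))
      = (2 * θmin / Real.pi) ^ (k - 1) *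
        ∏ p ∈ Finset.univ.erase j, (Nat.dist (p : ℕ) (j : ℕ) : ℝ) := by
    rw [Finset.prod_mul_distrib, Finset.prod_const, hcard]
  -- the natural number product
  have hnat : ∏ p ∈ Finset.univ.erase j, Nat.dist (p : ℕ) (j : ℕ)
      = (j : ℕ).factorial * (k - 1 - (j : ℕ)).factorial := by
    have himg : (Finset.univ.erase j).image (Fin.val) = (Finset.range k).erase (j : ℕ) := by
      ext i
      simp only [Finset.mem_image, Finset.mem_erase, Finset.mem_univ, and_true,
        Finset.mem_range]
      constructor
      · rintro ⟨p, hp, rfl⟩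
        exact ⟨fun h => hp (Fin.ext h), p.isLt⟩
      · rintro ⟨h1, h2⟩
        exact ⟨⟨i, h2⟩, fun h => h1 (congrArg Fin.val h), rfl⟩
    have hinj : ∀ p ∈ Finset.univ.erase j, ∀ q ∈ Finset.univ.erase j,
        (p : ℕ) = (q : ℕ) → p = q := fun p _ q _ h => Fin.ext h
    have := Finset.prod_image (f := fun i => Nat.dist i (j : ℕ)) hinj
    rw [himg] at this
    rw [← this]
    have hsplit : (Finset.range k).erase (j : ℕ)
        = Finset.range (j : ℕ) ∪ Finset.Ico ((j : ℕ) + 1) k := by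
      ext i
      simp only [Finset.mem_erase, Finset.mem_range, Finset.mem_union, Finset.mem_Ico]
      omega
    rw [hsplit, Finset.prod_union (by
      rw [Finset.disjoint_left]
      intro i hi1 hi2
      simp only [Finset.mem_range] at hi1
      simp only [Finset.mem_Ico] at hi2
      omega)]
    have hleft : ∏ i ∈ Finset.range (j : ℕ), Nat.dist i (j : ℕ) = (j : ℕ).factorial := by
      rw [← aux_prod_range_sub]
      refine Finset.prod_congr rfl fun i hi => ?_
      rw [Finset.mem_range] at hi
      unfold Nat.dist; omega
    have hright : ∏ i ∈ Finset.Ico ((j : ℕ) + 1) k, Nat.dist i (j : ℕ)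
        = (k - 1 - (j : ℕ)).factorial := by
      rw [Finset.prod_Ico_eq_prod_range]
      rw [← Finset.prod_range_add_one_eq_factorial (k - 1 - (j : ℕ))]
      have hn : k - ((j : ℕ) + 1) = k - 1 - (j : ℕ) := by omega
      rw [hn]
      refine Finset.prod_congr rfl fun i hi => ?_
      unfold Nat.dist; omega
    rw [hleft, hright]
  -- zeta bound
  have hzeta : zeta k ≤ ((j : ℕ).factorial * (k - 1 - (j : ℕ)).factorial : ℕ) := by
    rw [aux_zeta_eq k hk]
    have hj : (j : ℕ) ≤ k - 1 := by omega
    have := aux_fact_fact_le (n := k - 1) hj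
    exact_mod_cast this
  -- put it together
  calc zeta k * (2 * θmin / Real.pi) ^ (k - 1)
      ≤ ((j : ℕ).factorial * (k - 1 - (j : ℕ)).factorial : ℕ) *
          (2 * θmin / Real.pi) ^ (k - 1) := by
        apply mul_le_mul_of_nonneg_right hzeta (by positivity)
    _ = (2 * θmin / Real.pi) ^ (k - 1) *
          ∏ p ∈ Finset.univ.erase j, (Nat.dist (p : ℕ) (j : ℕ) : ℝ) := by
        rw [← hnat]; push_cast; ring
    _ = ∏ p ∈ Finset.univ.erase j,
          (2 * θmin / Real.pi * (Nat.dist (p : ℕ) (j : ℕ) : ℝ)) := hprod_split.symm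
    _ ≤ _ := main
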